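/- For every integer n ≥ 131, both intervals (n - √n, n) and (n, n + √n) contain a prime, if and only if p - p' < √(p') holds for every prime p ≥ 131, where p' is the previous prime before p. -/
import Mathlib


def PrevPrime (p p' : ℕ) : Prop :=
  p'.Prime ∧ p' < p ∧ ∀ r : ℕ, r.Prime → r < p → r ≤ p'

lemma exists_prevPrime {p : ℕ} (hp : 2 < p) : ∃ p', PrevPrime p p' := by
  refine ⟨Nat.findGreatest Nat.Prime (p - 1), ?_, ?_, ?_⟩
  · exact Nat.findGreatest_spec (m := 2) (by omega) Nat.prime_two
  · have := Nat.findGreatest_le (P := Nat.Prime) (p - 1)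
    omega
  · intro r hr hrp
    exact Nat.le_findGreatest (by omega) hr

lemma exists_nextPrime (n : ℕ) : ∃ p : ℕ, p.Prime ∧ n < p ∧ ∀ q, q.Prime → n < q → p ≤ q := by
  have hex : ∃ p, p.Prime ∧ n < p := by
    obtain ⟨p, hp1, hp2⟩ := Nat.exists_infinite_primes (n + 1)
    exact ⟨p, hp2, by omega⟩
  exact ⟨Nat.find hex, (Nat.find_spec hex).1, (Nat.find_spec hex).2,
    fun q hq hnq => Nat.find_min' hex ⟨hq, hnq⟩⟩

theorem stmt10 :
    (∀ n : ℕ, 131 ≤ n →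
      (∃ p : ℕ, p.Prime ∧ (n : ℝ) - Real.sqrt n < p ∧ p < n) ∧
      (∃ q : ℕ, q.Prime ∧ (n : ℝ) < q ∧ (q : ℝ) < n + Real.sqrt n)) ↔
    (∀ p p' : ℕ, p.Prime → 131 ≤ p → PrevPrime p p' → (p : ℝ) - p' < Real.sqrt p') := by
  constructor
  · intro h p p' hp hp131 hprev
    obtain ⟨hp'p, hp'lt, hp'max⟩ := hprev
    by_cases hcase : p = 131
    · -- then p' = 127
      subst hcase
      have h127 : (127 : ℕ) ≤ p' := hp'max 127 (by norm_num) (by omega)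
      have hp'eq : p' = 127 := by
        interval_cases p' <;> first | rfl | (exfalso; revert hp'p; norm_num)
      subst hp'eq
      have : (4 : ℝ) < Real.sqrt 127 := by
        have := Real.sq_sqrt (by norm_num : (127:ℝ) ≥ 0)
        nlinarith [Real.sqrt_nonneg (127:ℝ)]
      push_cast
      linarith
    · -- p > 131, so 131 ≤ p', apply h at n = p'
      have h131p' : 131 ≤ p' := hp'max 131 (by norm_num) (by omega)
      obtain ⟨-, q, hq, hq1, hq2⟩ := h p' h131p'
      have hq' : p' < q := by exact_mod_cast hq1
      have hpq : p ≤ q := by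
        by_contra hlt
        have := hp'max q hq (by omega)
        omega
      have : (p : ℝ) ≤ q := by exact_mod_cast hpq
      linarith
  · intro h n hn
    obtain ⟨p, hp, hnp, hpmin⟩ := exists_nextPrime n
    obtain ⟨p', hprev⟩ := exists_prevPrime (p := p) (by omega)
    obtain ⟨hp'p, hp'lt, hp'max⟩ := hprev
    have hp131 : 131 ≤ p := by omega
    have hgap : (p : ℝ) - p' < Real.sqrt p' := h p p' hp hp131 ⟨hp'p, hp'lt, hp'max⟩
    have hp'n : p' ≤ n := by
      by_contra hgt
      have := hpmin p' hp'p (by omega)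
      omega
    have hsq : Real.sqrt p' ≤ Real.sqrt n := Real.sqrt_le_sqrt (by exact_mod_cast hp'n)
    constructor
    · -- lower interval
      by_cases hnpr : n.Prime
      · obtain ⟨q0, hq0p, hq0lt, hq0max⟩ := exists_prevPrime (p := n) (by omega)
        have hgap0 : (n : ℝ) - q0 < Real.sqrt q0 := h n q0 hnpr hn ⟨hq0p, hq0lt, hq0max⟩
        have hsq0 : Real.sqrt q0 ≤ Real.sqrt n :=
          Real.sqrt_le_sqrt (by exact_mod_cast hq0lt.le)
        exact ⟨q0, hq0p, by linarith, hq0lt⟩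
      · have hp'ltn : p' < n := lt_of_le_of_ne hp'n (fun he => hnpr (he ▸ hp'p))
        refine ⟨p', hp'p, ?_, hp'ltn⟩
        have hnpR : (n : ℝ) < p := by exact_mod_cast hnp
        linarith
    · -- upper interval
      refine ⟨p, hp, by exact_mod_cast hnp, ?_⟩
      have : (p' : ℝ) ≤ n := by exact_mod_cast hp'n
      linarith
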